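/- Min-marginal averaging does not decrease the dual bound: suppose variable i appears in subproblems j ∈ S (with |S| = k ≥ 1), with min-marginal differences M_j(i). Update λ̂^j_i := λ^j_i − M_j(i) + (1/k) Σ_{l ∈ S} M_l(i) for j ∈ S and leave all other entries unchanged. Then Σ_j λ̂^j = Σ_j λ^j (feasibility of the split is preserved) and D(λ̂) ≥ D(λ). -/

import Mathlib

open Finset

/-- objective value of a binary vector `x` under costs `l`. -/
def dot {n : ℕ} (l : Fin n → ℝ) (x : Fin n → Bool) : ℝ :=
  ∑ i, if x i then l i else 0

/-- minimum of the objective over a set of binary vectors. -/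
noncomputable def subMin {n : ℕ} (C : Set (Fin n → Bool)) (l : Fin n → ℝ) : ℝ :=
  sInf (Set.image (dot l) C)

/-- Lagrange decomposition dual objective. -/
noncomputable def dualObj {n m : ℕ} (C : Fin m → Set (Fin n → Bool))
    (lam : Fin m → Fin n → ℝ) : ℝ :=
  ∑ j, subMin (C j) (lam j)

/-- min-marginal difference of variable `i` in a subproblem. -/
noncomputable def mmDiff {n : ℕ} (C : Set (Fin n → Bool)) (l : Fin n → ℝ) (i : Fin n) : ℝ :=
  subMin {x ∈ C | x i = true} l - subMin {x ∈ C | x i = false} l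

lemma subMin_exists {n : ℕ} {C : Set (Fin n → Bool)} (hC : C.Nonempty) (l : Fin n → ℝ) :
    ∃ x ∈ C, dot l x = subMin C l := by
  have hfin : (Set.image (dot l) C).Finite := (Set.toFinite C).image _
  obtain ⟨x, hx, hdx⟩ := (hC.image (dot l)).csInf_mem hfin
  exact ⟨x, hx, hdx⟩

lemma subMin_le {n : ℕ} {C : Set (Fin n → Bool)} {x : Fin n → Bool} (hx : x ∈ C)
    (l : Fin n → ℝ) : subMin C l ≤ dot l x :=
  csInf_le ((Set.toFinite C).image _).bddBelow ⟨x, hx, rfl⟩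

lemma le_subMin {n : ℕ} {C : Set (Fin n → Bool)} (hC : C.Nonempty) {a : ℝ} (l : Fin n → ℝ)
    (h : ∀ x ∈ C, a ≤ dot l x) : a ≤ subMin C l :=
  le_csInf (hC.image _) (by rintro b ⟨x, hx, rfl⟩; exact h x hx)

lemma subMin_split {n : ℕ} (C : Set (Fin n → Bool)) (l : Fin n → ℝ) (i : Fin n)
    (h0 : {x ∈ C | x i = false}.Nonempty) (h1 : {x ∈ C | x i = true}.Nonempty) :
    subMin C l = min (subMin {x ∈ C | x i = false} l) (subMin {x ∈ C | x i = true} l) := by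
  have hCne : C.Nonempty := by obtain ⟨x, hx, _⟩ := h0; exact ⟨x, hx⟩
  apply le_antisymm
  · apply le_min
    · obtain ⟨x0, hx0, hd0⟩ := subMin_exists h0 l
      exact hd0 ▸ subMin_le hx0.1 l
    · obtain ⟨x1, hx1, hd1⟩ := subMin_exists h1 l
      exact hd1 ▸ subMin_le hx1.1 l
  · apply le_subMin hCne
    intro x hx
    cases hxi : x i with
    | false =>
        have hm : x ∈ {x ∈ C | x i = false} := ⟨hx, hxi⟩
        exact (min_le_left _ _).trans (subMin_le hm l)
    | true =>
        have hm : x ∈ {x ∈ C | x i = true} := ⟨hx, hxi⟩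
        exact (min_le_right _ _).trans (subMin_le hm l)

lemma dot_diff {n : ℕ} (l l' : Fin n → ℝ) (i : Fin n)
    (h : ∀ k, k ≠ i → l' k = l k) (x : Fin n → Bool) :
    dot l' x = dot l x + (if x i then l' i - l i else 0) := by
  unfold dot
  have key : ∀ k, (if x k then l' k else 0)
      = (if x k then l k else 0) + (if k = i then (if x i then l' i - l i else 0) else 0) := by
    intro k
    by_cases hk : k = i
    · subst hk; by_cases hx : x k <;> simp [hx] <;> ring
    · rw [if_neg hk, add_zero, h k hk]
  simp_rw [key]
  rw [Finset.sum_add_distrib, Finset.sum_ite_eq' Finset.univ i]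
  simp

lemma subMin_false_shift {n : ℕ} {C : Set (Fin n → Bool)} {l l' : Fin n → ℝ} {i : Fin n}
    (h : ∀ k, k ≠ i → l' k = l k) :
    subMin {x ∈ C | x i = false} l' = subMin {x ∈ C | x i = false} l := by
  unfold subMin
  congr 1
  apply Set.image_congr
  intro x hx
  rw [dot_diff l l' i h x, hx.2]
  simp

lemma subMin_true_shift {n : ℕ} {C : Set (Fin n → Bool)} {l l' : Fin n → ℝ} {i : Fin n}
    (h1 : {x ∈ C | x i = true}.Nonempty)
    (h : ∀ k, k ≠ i → l' k = l k) :
    subMin {x ∈ C | x i = true} l' = subMin {x ∈ C | x i = true} l + (l' i - l i) := by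
  have hd : ∀ x ∈ {x ∈ C | x i = true}, dot l' x = dot l x + (l' i - l i) := by
    intro x hx
    rw [dot_diff l l' i h x, hx.2]
    simp
  apply le_antisymm
  · obtain ⟨x1, hx1, hd1⟩ := subMin_exists h1 l
    calc subMin {x ∈ C | x i = true} l' ≤ dot l' x1 := subMin_le hx1 l'
      _ = dot l x1 + (l' i - l i) := hd x1 hx1
      _ = _ := by rw [hd1]
  · apply le_subMin h1
    intro x hx
    rw [hd x hx]
    linarith [subMin_le hx l]

theorem min_marginal_averaging_nondecreasing {n m : ℕ} (c : Fin n → ℝ)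
    (C : Fin m → Set (Fin n → Bool)) (hC : ∀ j, (C j).Nonempty)
    (lam lamHat : Fin m → Fin n → ℝ) (hsplit : ∑ j, lam j = c)
    (i : Fin n) (S : Finset (Fin m)) (hS : S.Nonempty)
    (hfix : ∀ j ∈ S, {x ∈ C j | x i = false}.Nonempty ∧ {x ∈ C j | x i = true}.Nonempty)
    (hout : ∀ j ∉ S, lamHat j = lam j)
    (hsame : ∀ j ∈ S, ∀ k, k ≠ i → lamHat j k = lam j k)
    (hupd : ∀ j ∈ S, lamHat j i = lam j i - mmDiff (C j) (lam j) i
        + (1 / (S.card : ℝ)) * ∑ l ∈ S, mmDiff (C l) (lam l) i) :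
    (∑ j, lamHat j = c) ∧ dualObj C lam ≤ dualObj C lamHat := by
  set A : ℝ := (1 / (S.card : ℝ)) * ∑ l ∈ S, mmDiff (C l) (lam l) i with hA
  have hcard : (S.card : ℝ) ≠ 0 := by
    exact_mod_cast Finset.card_ne_zero.mpr hS
  -- the change in coordinate i for j ∈ S
  have hdelta : ∀ j ∈ S, lamHat j i - lam j i = A - mmDiff (C j) (lam j) i := by
    intro j hj; rw [hupd j hj]; ring
  constructor
  · rw [← hsplit]
    funext k
    rw [Finset.sum_apply, Finset.sum_apply]
    by_cases hk : k = i
    · subst hk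
      have hdiff : (∑ j, lamHat j k) - (∑ j, lam j k) = 0 := by
        rw [← Finset.sum_sub_distrib]
        rw [← Finset.sum_subset (Finset.subset_univ S)
          (by intro j _ hj; rw [hout j hj]; ring)]
        rw [Finset.sum_congr rfl (fun j hj => hdelta j hj)]
        rw [Finset.sum_sub_distrib, Finset.sum_const, hA]
        field_simp
        rw [nsmul_eq_mul, mul_comm, div_mul_cancel₀ _ hcard, sub_self]
      linarith
    · exact Finset.sum_congr rfl (fun j _ => by
        by_cases hj : j ∈ S
        · exact hsame j hj k hk
        · rw [hout j hj])
  · -- dual bound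
    have key : ∀ j ∈ S,
        subMin (C j) (lamHat j) - subMin (C j) (lam j)
          = min 0 A - min 0 (mmDiff (C j) (lam j) i) := by
      intro j hj
      obtain ⟨h0, h1⟩ := hfix j hj
      have hs : ∀ k, k ≠ i → lamHat j k = lam j k := hsame j hj
      have e0 : subMin {x ∈ C j | x i = false} (lamHat j)
          = subMin {x ∈ C j | x i = false} (lam j) := subMin_false_shift hs
      have e1 : subMin {x ∈ C j | x i = true} (lamHat j)
          = subMin {x ∈ C j | x i = true} (lam j) + (lamHat j i - lam j i) :=
        subMin_true_shift h1 hs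
      set m0 := subMin {x ∈ C j | x i = false} (lam j)
      set m1 := subMin {x ∈ C j | x i = true} (lam j)
      have hM : mmDiff (C j) (lam j) i = m1 - m0 := rfl
      rw [subMin_split (C j) (lamHat j) i h0 h1, subMin_split (C j) (lam j) i h0 h1,
        e0, e1, hdelta j hj, hM]
      have e2 : m1 + (A - (m1 - m0)) = m0 + A := by ring
      have g1 : min m0 (m0 + A) = m0 + min 0 A := by
        rw [← min_add_add_left, add_zero]
      have g2 : min m0 m1 = m0 + min 0 (m1 - m0) := by
        rw [← min_add_add_left]
        congr 1 <;> ring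
      rw [e2, g1, g2]
      ring
    have hdual : dualObj C lamHat - dualObj C lam
        = (S.card : ℝ) * min 0 A - ∑ j ∈ S, min 0 (mmDiff (C j) (lam j) i) := by
      unfold dualObj
      rw [← Finset.sum_sub_distrib,
        ← Finset.sum_subset (Finset.subset_univ S)
          (fun j _ hj => by rw [hout j hj]; ring),
        Finset.sum_congr rfl key, Finset.sum_sub_distrib, Finset.sum_const,
        nsmul_eq_mul]
    have hineq : ∑ j ∈ S, min 0 (mmDiff (C j) (lam j) i) ≤ (S.card : ℝ) * min 0 A := by
      rcases le_total 0 (∑ l ∈ S, mmDiff (C l) (lam l) i) with h | h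
      · have hA0 : 0 ≤ A := by
          rw [hA]
          positivity
        rw [min_eq_left hA0, mul_zero]
        exact Finset.sum_nonpos (fun j _ => min_le_left _ _)
      · have hA0 : A ≤ 0 := by
          rw [hA]
          have : 0 ≤ (1 / (S.card : ℝ)) := by positivity
          exact mul_nonpos_of_nonneg_of_nonpos this h
        rw [min_eq_right hA0, hA]
        have : (S.card : ℝ) * ((1 / (S.card : ℝ)) * ∑ l ∈ S, mmDiff (C l) (lam l) i)
            = ∑ l ∈ S, mmDiff (C l) (lam l) i := by
          field_simp
        rw [this]
        exact Finset.sum_le_sum (fun j _ => min_le_right _ _)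
    linarith
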